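/- Let p be a prime, let L ≥ 1, and let P be a finite set of pairs (u, v) of strings over ZMod p such that for every (u, v) ∈ P, u ≠ v and |u| = |v| ≤ L. Then Σ_{x ∈ ZMod p} |{(u, v) ∈ P : φ_{p,x}(u) = φ_{p,x}(v)}| ≤ |P| · L; consequently, there exists x ∈ ZMod p such that the number of pairs (u, v) ∈ P with φ_{p,x}(u) = φ_{p,x}(v) is at most |P| · L / p (as a real number). -/

import Mathlib

/-- The Karp–Rabin fingerprint `φ_{p,x}(S) = Σ_{k < |S|} S[k]·xᵏ` over `ZMod p`. -/
def fp {p : ℕ} (x : ZMod p) (S : List (ZMod p)) : ZMod p :=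
  ∑ k ∈ Finset.range S.length, S.getD k 0 * x ^ k

lemma pair_bound {p L : ℕ} [Fact p.Prime] (u v : List (ZMod p)) (hne : u ≠ v)
    (hlen : u.length = v.length) (hle : u.length ≤ L) :
    (Finset.univ.filter (fun x : ZMod p => fp x u = fp x v)).card ≤ L := by
  set q : Polynomial (ZMod p) :=
    ∑ k ∈ Finset.range u.length,
      Polynomial.C (u.getD k 0 - v.getD k 0) * Polynomial.X ^ k with hq
  have hcoeff : ∀ j, q.coeff j =
      if j < u.length then u.getD j 0 - v.getD j 0 else 0 := by
    intro j
    simp only [hq, Polynomial.finset_sum_coeff, Polynomial.coeff_C_mul,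
      Polynomial.coeff_X_pow, mul_ite, mul_one, mul_zero]
    rw [Finset.sum_ite_eq (Finset.range u.length) j]
    simp [Finset.mem_range]
  have hq0 : q ≠ 0 := by
    intro h
    apply hne
    apply List.ext_getElem hlen
    intro k hk1 hk2
    have hc := hcoeff k
    rw [h, Polynomial.coeff_zero, if_pos hk1] at hc
    have : u.getD k 0 = v.getD k 0 := sub_eq_zero.mp hc.symm
    rwa [List.getD_eq_getElem u 0 hk1, List.getD_eq_getElem v 0 hk2] at this
  have hdeg : q.natDegree ≤ L := by
    apply Polynomial.natDegree_le_iff_coeff_eq_zero.mpr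
    intro m hm
    rw [hcoeff, if_neg]
    omega
  have heval : ∀ x : ZMod p, fp x u = fp x v ↔ q.eval x = 0 := by
    intro x
    have : q.eval x = fp x u - fp x v := by
      simp only [hq, Polynomial.eval_finset_sum, Polynomial.eval_mul, Polynomial.eval_C,
        Polynomial.eval_pow, Polynomial.eval_X, fp, ← hlen, sub_mul, Finset.sum_sub_distrib]
    rw [this, sub_eq_zero]
  calc (Finset.univ.filter (fun x : ZMod p => fp x u = fp x v)).card
      ≤ q.roots.toFinset.card := by
        apply Finset.card_le_card
        intro x hx
        simp only [Finset.mem_filter] at hx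
        rw [Multiset.mem_toFinset, Polynomial.mem_roots hq0]
        exact (heval x).mp hx.2
    _ ≤ Multiset.card q.roots := Multiset.toFinset_card_le _
    _ ≤ q.natDegree := Polynomial.card_roots' q
    _ ≤ L := hdeg

/-- For a set `P` of pairs of distinct equal-length strings of length at most `L`, the
total number of fingerprint collisions over all `x ∈ ZMod p` is at most `|P| · L`;
consequently some `x` incurs at most `|P| · L / p` collisions. -/
theorem stmt_14 (p : ℕ) [Fact p.Prime] (L : ℕ) (hL : 1 ≤ L)
    (P : Finset (List (ZMod p) × List (ZMod p)))
    (hP : ∀ uv ∈ P, uv.1 ≠ uv.2 ∧ uv.1.length = uv.2.length ∧ uv.1.length ≤ L) :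
    (∑ x : ZMod p, (P.filter (fun uv => fp x uv.1 = fp x uv.2)).card ≤ P.card * L) ∧
    ∃ x : ZMod p, ((P.filter (fun uv => fp x uv.1 = fp x uv.2)).card : ℝ) ≤
      (P.card : ℝ) * L / p := by
  have hp : 0 < p := (Fact.out : p.Prime).pos
  haveI : NeZero p := ⟨hp.ne'⟩
  have key : ∑ x : ZMod p, (P.filter (fun uv => fp x uv.1 = fp x uv.2)).card ≤ P.card * L := by
    have hswap : ∑ x : ZMod p, (P.filter (fun uv => fp x uv.1 = fp x uv.2)).card
        = ∑ uv ∈ P, (Finset.univ.filter (fun x : ZMod p => fp x uv.1 = fp x uv.2)).card := by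
      simp only [Finset.card_filter]
      rw [Finset.sum_comm]
    rw [hswap]
    calc ∑ uv ∈ P, (Finset.univ.filter (fun x : ZMod p => fp x uv.1 = fp x uv.2)).card
        ≤ ∑ _uv ∈ P, L := by
          apply Finset.sum_le_sum
          intro uv huv
          obtain ⟨h1, h2, h3⟩ := hP uv huv
          exact pair_bound uv.1 uv.2 h1 h2 h3
      _ = P.card * L := by rw [Finset.sum_const, smul_eq_mul]
  refine ⟨key, ?_⟩
  have hconst : ∑ _x : ZMod p, (P.card : ℝ) * L / p = (P.card : ℝ) * L := by
    rw [Finset.sum_const, Finset.card_univ, ZMod.card, nsmul_eq_mul]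
    field_simp
  have hub : (∑ x : ZMod p, ((P.filter (fun uv => fp x uv.1 = fp x uv.2)).card : ℝ))
      ≤ ∑ _x : ZMod p, (P.card : ℝ) * L / p := by
    rw [hconst, ← Nat.cast_sum]
    exact_mod_cast key
  obtain ⟨x, -, hx⟩ := Finset.exists_le_of_sum_le Finset.univ_nonempty hub
  exact ⟨x, hx⟩
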